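/- The Vandermonde matrix factors as 𝕍(T) = 𝔼(T)·ℍ(T), where 𝕍(T) = (T_i^{j−1})_{i,j=1}^r, 𝔼(T) = (e_{j−1}(T̂_i))_{i,j=1}^r, and ℍ(T) = ((−1)^{i−1} h_{j−i}(T))_{i,j=1}^r (with h_k = 0 for k < 0). -/

import Mathlib

open scoped BigOperators

/-- The complete homogeneous symmetric polynomial `h_m(T_1,…,T_r)`. -/
noncomputable def hsymm {R : Type*} [CommRing R] (r : ℕ) (T : Fin r → R) (m : ℕ) : R :=
  ∑ c ∈ Finset.Nat.antidiagonalTuple r m, ∏ i, T i ^ c i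

section aux
variable {R : Type*} [CommRing R] {r : ℕ} (T : Fin r → R)

/-- Elementary symmetric polynomial in the variables indexed by `S`. -/
noncomputable def ee (S : Finset (Fin r)) (k : ℕ) : R :=
  ∑ s ∈ S.powersetCard k, ∏ l ∈ s, T l

/-- Complete homogeneous symmetric polynomial in the variables indexed by `S`. -/
noncomputable def hh (S : Finset (Fin r)) (m : ℕ) : R :=
  ∑ c ∈ (Finset.Nat.antidiagonalTuple r m).filter (fun c => ∀ l, l ∉ S → c l = 0),
    ∏ l, T l ^ c l

lemma hh_univ (m : ℕ) : hh T Finset.univ m = hsymm r T m := by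
  simp [hh, hsymm]

lemma hh_zero (S : Finset (Fin r)) : hh T S 0 = 1 := by
  rw [hh, Finset.Nat.antidiagonalTuple_zero_right]
  rw [Finset.filter_singleton]
  simp

lemma hh_empty (m : ℕ) : hh T ∅ (m + 1) = 0 := by
  rw [hh]
  convert Finset.sum_empty
  rw [Finset.filter_eq_empty_iff]
  intro c hc
  rw [Finset.Nat.mem_antidiagonalTuple] at hc
  intro h
  simp only [Finset.notMem_empty, not_false_iff, forall_true_left] at h
  simp [h] at hc

lemma ee_zero (S : Finset (Fin r)) : ee T S 0 = 1 := by simp [ee]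

lemma ee_empty (k : ℕ) : ee T ∅ (k + 1) = 0 := by
  rw [ee, Finset.powersetCard_eq_empty.2 (by simp), Finset.sum_empty]

lemma ee_rec {S : Finset (Fin r)} {i : Fin r} (hi : i ∈ S) (k : ℕ) :
    ee T S (k + 1) = ee T (S.erase i) (k + 1) + T i * ee T (S.erase i) k := by
  have h1 : S = insert i (S.erase i) := (Finset.insert_erase hi).symm
  rw [ee]
  conv_lhs => rw [h1]
  rw [Finset.powersetCard_succ_insert (Finset.notMem_erase i S)]
  rw [Finset.sum_union]
  · congr 1
    rw [Finset.sum_image]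
    · rw [ee, Finset.mul_sum]
      refine Finset.sum_congr rfl fun s hs => ?_
      rw [Finset.mem_powersetCard] at hs
      rw [Finset.prod_insert (fun h => Finset.notMem_erase i S (hs.1 h))]
    · intro s hs t ht hst
      rw [Finset.mem_coe, Finset.mem_powersetCard] at hs ht
      have hi1 : i ∉ s := fun h => Finset.notMem_erase i S (hs.1 h)
      have hi2 : i ∉ t := fun h => Finset.notMem_erase i S (ht.1 h)
      rw [← Finset.erase_insert hi1, ← Finset.erase_insert hi2, hst]
  · rw [Finset.disjoint_right]
    rintro s hs hs'
    rw [Finset.mem_image] at hs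
    obtain ⟨t, ht, rfl⟩ := hs
    rw [Finset.mem_powersetCard] at hs'
    exact Finset.notMem_erase i S (hs'.1 (Finset.mem_insert_self i t))

lemma hh_rec {S : Finset (Fin r)} {i : Fin r} (hi : i ∈ S) (m : ℕ) :
    hh T S (m + 1) = T i * hh T S m + hh T (S.erase i) (m + 1) := by
  classical
  rw [hh]
  rw [← Finset.sum_filter_add_sum_filter_not _ (fun c => c i ≠ 0)]
  congr 1
  · -- c i ≠ 0 part equals T i * hh T S m
    rw [hh, Finset.mul_sum]
    refine Finset.sum_nbij' (fun c => Function.update c i (c i - 1))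
      (fun d => Function.update d i (d i + 1)) ?_ ?_ ?_ ?_ ?_
    · intro c hc
      simp only [Finset.mem_filter, Finset.Nat.mem_antidiagonalTuple, ne_eq] at hc ⊢
      obtain ⟨⟨hsum, hP⟩, hne⟩ := hc
      rw [← Finset.add_sum_erase _ c (Finset.mem_univ i)] at hsum
      refine ⟨?_, ?_⟩
      · rw [Finset.sum_update_of_mem (Finset.mem_univ i), Finset.sdiff_singleton_eq_erase]
        omega
      · intro l hl
        rcases eq_or_ne l i with rfl | h
        · exact absurd hi hl
        · rw [Function.update_of_ne h]; exact hP l hl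
    · intro d hd
      simp only [Finset.mem_filter, Finset.Nat.mem_antidiagonalTuple, ne_eq] at hd ⊢
      obtain ⟨hsum, hP⟩ := hd
      rw [← Finset.add_sum_erase _ d (Finset.mem_univ i)] at hsum
      refine ⟨⟨?_, ?_⟩, ?_⟩
      · rw [Finset.sum_update_of_mem (Finset.mem_univ i), Finset.sdiff_singleton_eq_erase]
        omega
      · intro l hl
        rcases eq_or_ne l i with rfl | h
        · exact absurd hi hl
        · rw [Function.update_of_ne h]; exact hP l hl
      · simp
    · intro c hc
      simp only [Finset.mem_filter, ne_eq] at hc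
      have hne : c i ≠ 0 := hc.2
      funext l
      rcases eq_or_ne l i with rfl | h
      · simp only [Function.update_self]
        omega
      · simp [Function.update_of_ne h]
    · intro d hd
      funext l
      rcases eq_or_ne l i with rfl | h
      · simp
      · simp [Function.update_of_ne h]
    · intro c hc
      simp only [Finset.mem_filter, ne_eq] at hc
      have hne : c i ≠ 0 := hc.2
      rw [← Finset.mul_prod_erase _ _ (Finset.mem_univ i),
          ← Finset.mul_prod_erase _ (fun l => T l ^ Function.update c i (c i - 1) l)
            (Finset.mem_univ i)]
      rw [Function.update_self]
      have h2 : T i * T i ^ (c i - 1) = T i ^ c i := by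
        rw [← pow_succ']
        congr 1
        omega
      rw [← mul_assoc, h2]
      congr 1
      refine Finset.prod_congr rfl fun l hl => ?_
      rw [Function.update_of_ne (Finset.ne_of_mem_erase hl)]
  · -- c i = 0 part equals hh (S.erase i) (m+1)
    rw [hh]
    congr 1
    rw [Finset.filter_filter]
    refine Finset.filter_congr fun c _ => ?_
    simp only [ne_eq, not_not, Finset.mem_erase]
    constructor
    · rintro ⟨hP, hci⟩ l hl
      rcases eq_or_ne l i with rfl | h
      · exact hci
      · exact hP l (fun hmem => hl ⟨h, hmem⟩)
    · intro h
      exact ⟨fun l hl => h l (fun h2 => hl h2.2), h i (by simp)⟩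

lemma A_rec {S : Finset (Fin r)} {j : Fin r} (hj : j ∈ S) (m : ℕ) :
    ∑ k ∈ Finset.range (m + 2), (-1 : R) ^ k * ee T (S.erase j) k * hh T S (m + 1 - k)
      = T j * ∑ k ∈ Finset.range (m + 1), (-1 : R) ^ k * ee T (S.erase j) k * hh T S (m - k)
        + ∑ k ∈ Finset.range (m + 2),
            (-1 : R) ^ k * ee T (S.erase j) k * hh T (S.erase j) (m + 1 - k) := by
  rw [Finset.sum_range_succ, Finset.sum_range_succ
    (f := fun k => (-1 : R) ^ k * ee T (S.erase j) k * hh T (S.erase j) (m + 1 - k))]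
  have h1 : ∀ k ∈ Finset.range (m + 1),
      (-1 : R) ^ k * ee T (S.erase j) k * hh T S (m + 1 - k)
      = T j * ((-1 : R) ^ k * ee T (S.erase j) k * hh T S (m - k))
        + (-1 : R) ^ k * ee T (S.erase j) k * hh T (S.erase j) (m + 1 - k) := by
    intro k hk
    rw [Finset.mem_range] at hk
    have h2 : m + 1 - k = (m - k) + 1 := by omega
    rw [h2, hh_rec T hj (m - k)]
    ring
  rw [Finset.sum_congr rfl h1, Finset.sum_add_distrib, ← Finset.mul_sum]
  have h3 : m + 1 - (m + 1) = 0 := by omega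
  rw [h3, hh_zero, hh_zero]
  ring

lemma B_lemma (S : Finset (Fin r)) (m : ℕ) :
    ∑ k ∈ Finset.range (m + 2), (-1 : R) ^ k * ee T S k * hh T S (m + 1 - k) = 0 := by
  classical
  induction S using Finset.strongInduction generalizing m with
  | _ S ih =>
    rcases S.eq_empty_or_nonempty with rfl | ⟨j, hj⟩
    · refine Finset.sum_eq_zero fun k hk => ?_
      match k with
      | 0 => rw [ee_zero]; have : m + 1 - 0 = m + 1 := by omega
             rw [this, hh_empty]; ring
      | k + 1 => rw [ee_empty]; ring
    · have hsub : S.erase j ⊂ S := Finset.erase_ssubset hj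
      have expand : ∑ k ∈ Finset.range (m + 2), (-1 : R) ^ k * ee T S k * hh T S (m + 1 - k)
          = ∑ k ∈ Finset.range (m + 2),
              (-1 : R) ^ k * ee T (S.erase j) k * hh T S (m + 1 - k)
            - T j * ∑ k ∈ Finset.range (m + 1),
                (-1 : R) ^ k * ee T (S.erase j) k * hh T S (m - k) := by
        rw [Finset.sum_range_succ' _ (m + 1), Finset.sum_range_succ'
          (f := fun k => (-1 : R) ^ k * ee T (S.erase j) k * hh T S (m + 1 - k)) (m + 1)]
        simp only [ee_rec T hj, pow_succ, Nat.sub_zero, ee_zero, Finset.mul_sum,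
          Nat.succ_sub_succ]
        have hb : ∀ x ∈ Finset.range (m + 1),
            (-1 : R) ^ x * -1 * (ee T (S.erase j) (x + 1) + T j * ee T (S.erase j) x)
              * hh T S (m - x)
            = (-1 : R) ^ x * -1 * ee T (S.erase j) (x + 1) * hh T S (m - x)
              - T j * ((-1 : R) ^ x * ee T (S.erase j) x * hh T S (m - x)) := by
          intro x hx; ring
        rw [Finset.sum_congr rfl hb, Finset.sum_sub_distrib]
        ring
      rw [expand, A_rec T hj m, ih _ hsub m]
      ring

lemma G_lemma (i : Fin r) (m : ℕ) :
    ∑ k ∈ Finset.range (m + 1),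
        (-1 : R) ^ k * ee T ((Finset.univ : Finset (Fin r)).erase i) k * hh T Finset.univ (m - k)
      = T i ^ m := by
  induction m with
  | zero => simp [ee_zero, hh_zero]
  | succ m ihm =>
    rw [show m + 1 + 1 = m + 2 from rfl, A_rec T (Finset.mem_univ i) m, ihm,
      B_lemma T (Finset.univ.erase i) m, add_zero, ← pow_succ']

end aux

theorem stmt2 {R : Type*} [CommRing R] (r : ℕ) (T : Fin r → R) :
    Matrix.of (fun i j : Fin r => T i ^ (j : ℕ)) =
      Matrix.of (fun i j : Fin r =>
        ∑ s ∈ Finset.powersetCard (j : ℕ) (Finset.univ.erase i), ∏ l ∈ s, T l) *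
      Matrix.of (fun i j : Fin r =>
        if (i : ℕ) ≤ (j : ℕ) then
          (-1 : R) ^ (i : ℕ) * hsymm r T ((j : ℕ) - (i : ℕ))
        else 0) := by
  ext i j
  rw [Matrix.mul_apply]
  simp only [Matrix.of_apply]
  have step1 : ∑ k : Fin r,
      (∑ s ∈ Finset.powersetCard (k : ℕ) (Finset.univ.erase i), ∏ l ∈ s, T l) *
        (if (k : ℕ) ≤ (j : ℕ) then (-1 : R) ^ (k : ℕ) * hsymm r T ((j : ℕ) - (k : ℕ)) else 0)
      = ∑ k ∈ Finset.range r,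
          ee T (Finset.univ.erase i) k *
            (if k ≤ (j : ℕ) then (-1 : R) ^ k * hsymm r T ((j : ℕ) - k) else 0) := by
    rw [← Fin.sum_univ_eq_sum_range (fun k => ee T (Finset.univ.erase i) k *
      (if k ≤ (j : ℕ) then (-1 : R) ^ k * hsymm r T ((j : ℕ) - k) else 0)) r]
    rfl
  rw [step1]
  have hsub : Finset.range ((j : ℕ) + 1) ⊆ Finset.range r :=
    Finset.range_subset_range.2 j.is_lt
  rw [← Finset.sum_subset hsub (fun x _ hx => by
    rw [Finset.mem_range, not_lt] at hx
    rw [if_neg (by omega), mul_zero])]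
  have step2 : ∀ k ∈ Finset.range ((j : ℕ) + 1),
      ee T (Finset.univ.erase i) k *
        (if k ≤ (j : ℕ) then (-1 : R) ^ k * hsymm r T ((j : ℕ) - k) else 0)
      = (-1 : R) ^ k * ee T ((Finset.univ : Finset (Fin r)).erase i) k *
          hh T Finset.univ ((j : ℕ) - k) := by
    intro k hk
    rw [Finset.mem_range] at hk
    rw [if_pos (by omega), hh_univ]
    ring
  rw [Finset.sum_congr rfl step2, G_lemma]
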